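/- Let α be a limit ordinal and for each limit δ ≤ α fix a strictly increasing ω-sequence ρ_δ : ω → δ converging to δ. Let Γ ⊆ ω^{<ω} be a tree with ⟨⟩ ∈ Γ such that every η ∈ Γ has infinitely many immediate successors η⌢⟨n⟩ ∈ Γ. Define g : Γ → α+1 by recursion: g(⟨⟩) = α; if g(η) = β + 1 and η⌢⟨ℓ⟩ ∈ Γ then g(η⌢⟨ℓ⟩) = β; if g(η) = δ is a limit ordinal and η⌢⟨ℓ⟩ ∈ Γ then g(η⌢⟨ℓ⟩) = ρ_δ(ℓ); if g(η) = 0 and η⌢⟨ℓ⟩ ∈ Γ then g(η⌢⟨ℓ⟩) = α. Then for every n < ω, the set A_n = {η ∈ Γ : g(η) = α and |{ℓ < length(η) : g(η↾ℓ) = α}| = n} is a front of Γ: every infinite branch of Γ has exactly one initial segment in A_n. -/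

import Mathlib

/-- Restriction of a branch `x : ℕ → ℕ` to length `m`, as a finite sequence. -/
def res (x : ℕ → ℕ) (m : ℕ) : List ℕ := List.ofFn fun i : Fin m => x i

/-- The `n`-th front `A_n` determined by the rank function `g` on the tree `Γ`:
nodes where `g` takes the value `α`, the value `α` having occurred exactly `n`
times at proper initial segments. -/
def Aset (Γ : Set (List ℕ)) (g : List ℕ → Ordinal) (α : Ordinal) (n : ℕ) :
    Set (List ℕ) :=
  {η | η ∈ Γ ∧ g η = α ∧ {ℓ : ℕ | ℓ < η.length ∧ g (η.take ℓ) = α}.ncard = n}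

lemma res_succ (x : ℕ → ℕ) (m : ℕ) : res x (m + 1) = res x m ++ [x m] := by
  rw [res, List.ofFn_succ']
  simp [res, List.concat_eq_append]

lemma res_prefix (x : ℕ → ℕ) {ℓ m : ℕ} (h : ℓ ≤ m) : res x ℓ <+: res x m := by
  induction m with
  | zero => simp_all
  | succ k ih =>
    rcases Nat.lt_succ_iff_lt_or_eq.mp (Nat.lt_succ_of_le h) with h' | h'
    · exact (ih (Nat.lt_succ_iff.mp h')).trans
        (by rw [res_succ]; exact List.prefix_append _ _)
    · simp [h']

lemma res_take (x : ℕ → ℕ) {ℓ m : ℕ} (h : ℓ ≤ m) : (res x m).take ℓ = res x ℓ := by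
  have hp := res_prefix x h
  have hl : (res x ℓ).length = ℓ := by simp [res]
  rw [List.prefix_iff_eq_take, hl] at hp
  exact hp.symm

theorem stmt9 (α : Ordinal) (hα : Order.IsSuccLimit α)
    (ρ : Ordinal → ℕ → Ordinal)
    (hρ : ∀ δ ≤ α, Order.IsSuccLimit δ →
      StrictMono (ρ δ) ∧ (∀ n, ρ δ n < δ) ∧ ∀ β < δ, ∃ n, β < ρ δ n)
    (Γ : Set (List ℕ)) (hnil : ([] : List ℕ) ∈ Γ)
    (hclosed : ∀ σ τ : List ℕ, σ <+: τ → τ ∈ Γ → σ ∈ Γ)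
    (hsplit : ∀ η ∈ Γ, {m : ℕ | η ++ [m] ∈ Γ}.Infinite)
    (g : List ℕ → Ordinal)
    (hg0 : g [] = α)
    (hgsucc : ∀ η ∈ Γ, ∀ ℓ : ℕ, η ++ [ℓ] ∈ Γ →
      ∀ β, g η = β + 1 → g (η ++ [ℓ]) = β)
    (hglim : ∀ η ∈ Γ, ∀ ℓ : ℕ, η ++ [ℓ] ∈ Γ →
      Order.IsSuccLimit (g η) → g (η ++ [ℓ]) = ρ (g η) ℓ)
    (hgzero : ∀ η ∈ Γ, ∀ ℓ : ℕ, η ++ [ℓ] ∈ Γ → g η = 0 → g (η ++ [ℓ]) = α)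
    (n : ℕ) :
    ∀ x : ℕ → ℕ, (∀ m : ℕ, res x m ∈ Γ) →
      ∃! m : ℕ, res x m ∈ Aset Γ g α n := by
  intro x hx
  classical
  set f : ℕ → Ordinal := fun m => g (res x m) with hf
  have hf0 : f 0 = α := by simpa [f, res] using hg0
  -- key step lemma
  have hstep : ∀ m, (f m = 0 → f (m + 1) = α) ∧ (f m ≠ 0 → f (m + 1) < f m) := by
    intro m
    have hmem : res x m ∈ Γ := hx m
    have hmem' : res x m ++ [x m] ∈ Γ := by rw [← res_succ]; exact hx (m + 1)
    constructor
    · intro h0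
      have := hgzero _ hmem (x m) hmem' h0
      simpa [f, res_succ] using this
    · intro h0
      rcases Ordinal.zero_or_succ_or_isSuccLimit (f m) with h | ⟨β, hβ⟩ | h
      · exact absurd h h0
      · have := hgsucc _ hmem (x m) hmem' β (by simpa [f] using hβ.symm)
        have h2 : f (m + 1) = β := by simpa [f, res_succ] using this
        rw [h2, ← hβ]; exact Order.lt_succ β
      · have := hglim _ hmem (x m) hmem' (by simpa [f] using h)
        have h2 : f (m + 1) = ρ (f m) (x m) := by simpa [f, res_succ] using this
        -- need f m ≤ α
        have hle : ∀ k, f k ≤ α := by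
          intro k
          induction k with
          | zero => simp [hf0]
          | succ j ih =>
            have hmj : res x j ∈ Γ := hx j
            have hmj' : res x j ++ [x j] ∈ Γ := by rw [← res_succ]; exact hx (j + 1)
            rcases Ordinal.zero_or_succ_or_isSuccLimit (f j) with h' | ⟨β, hβ⟩ | h'
            · have := hgzero _ hmj (x j) hmj' h'
              simp [f, res_succ, this]
            · have := hgsucc _ hmj (x j) hmj' β (by simpa [f] using hβ.symm)
              have h2' : f (j + 1) = β := by simpa [f, res_succ] using this
              rw [h2']
              exact le_of_lt (lt_of_lt_of_le (hβ ▸ Order.lt_succ β) ih)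
            · have := hglim _ hmj (x j) hmj' (by simpa [f] using h')
              have h2' : f (j + 1) = ρ (f j) (x j) := by simpa [f, res_succ] using this
              rw [h2']
              exact le_of_lt (lt_of_lt_of_le ((hρ (f j) ih h').2.1 (x j)) ih)
        rw [h2]
        exact (hρ (f m) (hle m) h).2.1 (x m)
  have hle : ∀ k, f k ≤ α := by
    intro k
    induction k with
    | zero => simp [hf0]
    | succ j ih =>
      by_cases h0 : f j = 0
      · exact le_of_eq ((hstep j).1 h0)
      · exact le_of_lt (lt_of_lt_of_le ((hstep j).2 h0) ih)
  have halpha : ∀ m, f (m + 1) = α ↔ f m = 0 := by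
    intro m
    constructor
    · intro h
      by_contra h0
      have := (hstep m).2 h0
      rw [h] at this
      exact absurd this (not_lt.mpr (hle m))
    · exact (hstep m).1
  -- every tail hits zero
  have hzero : ∀ m, ∃ k, m ≤ k ∧ f k = 0 := by
    intro m
    by_contra h
    push_neg at h
    have hanti : StrictAnti (fun j => f (m + j)) := by
      apply strictAnti_nat_of_succ_lt
      intro j
      exact (hstep (m + j)).2 (h (m + j) (Nat.le_add_right m j))
    obtain ⟨a, ⟨j, rfl⟩, ha⟩ := Ordinal.lt_wf.has_min
      (Set.range fun j => f (m + j)) ⟨_, ⟨0, rfl⟩⟩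
    exact ha _ ⟨j + 1, rfl⟩ (hanti (Nat.lt_succ_self j))
  -- the set of α-positions is infinite
  have hSinf : {m | f m = α}.Infinite := by
    rw [Set.infinite_coe_iff.symm]
    rw [Set.infinite_coe_iff]
    apply Set.infinite_of_not_bddAbove
    rw [not_bddAbove_iff]
    intro m
    obtain ⟨k, hk, hk0⟩ := hzero m
    exact ⟨k + 1, (halpha k).mpr hk0, Nat.lt_succ_of_le hk⟩
  -- now use Nat.nth / Nat.count machinery
  set p : ℕ → Prop := fun m => f m = α with hp
  have hpinf : (setOf p).Infinite := hSinf
  have hcount : ∀ m, {ℓ : ℕ | ℓ < (res x m).length ∧ g ((res x m).take ℓ) = α}.ncard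
      = Nat.count p m := by
    intro m
    have hlen : (res x m).length = m := by simp [res]
    have hset : {ℓ : ℕ | ℓ < (res x m).length ∧ g ((res x m).take ℓ) = α}
        = ↑({ℓ ∈ Finset.range m | p ℓ}) := by
      ext ℓ
      simp only [Set.mem_setOf_eq, Finset.coe_filter, Finset.mem_range, hlen, Set.mem_setOf_eq]
      constructor
      · rintro ⟨h1, h2⟩
        refine ⟨h1, ?_⟩
        rwa [res_take x (le_of_lt h1)] at h2
      · rintro ⟨h1, h2⟩
        refine ⟨h1, ?_⟩
        rwa [res_take x (le_of_lt h1)]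
    rw [hset, Set.ncard_coe_finset, Nat.count_eq_card_filter_range]
  refine ⟨Nat.nth p n, ⟨hx _, Nat.nth_mem_of_infinite hpinf n, ?_⟩, ?_⟩
  · rw [hcount, Nat.count_nth_of_infinite hpinf]
  · rintro m ⟨-, hm1, hm2⟩
    rw [hcount] at hm2
    have := Nat.nth_count (p := p) (n := m) hm1
    rw [hm2] at this
    exact this.symm
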